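/- Let Δ = {(x_i, y_j, z_{i,j}, t_{i,j})} and Δ* = {(x*_i, y*_j, z_{i,j}, t_{i,j})} be two sets of generalized interpolation data having the same z-values, the same t-values and the same parameters α_{n,m}, β_{n,m}, γ_{n,m}, whose knots satisfy the invariance-of-ratio condition. Then a pair of continuous functions (F₁, F₂) on S is the CHFIS pair for Δ if and only if the pair (F₁ ∘ K, F₂ ∘ K) on S* (i.e. F ∘ R⁻¹) is the CHFIS pair for Δ*. -/

import Mathlib

open Real Set

noncomputable section

/-- `z_eva` (resp. `t_eva`) from the paper: `z N M - z N 0 - z 0 M + z 0 0`. -/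
def eva (N M : ℕ) (z : ℕ → ℕ → ℝ) : ℝ := z N M - z N 0 - z 0 M + z 0 0

/-- The coefficient `g_{n,m}` determined by the join-up conditions. -/
def gCoef (N M : ℕ) (x y : ℕ → ℝ) (z t : ℕ → ℕ → ℝ) (a b : ℕ → ℕ → ℝ) (n m : ℕ) : ℝ :=
  (z (n-1) (m-1) - z (n-1) m - z n (m-1) + z n m
    - a n m * eva N M z - b n m * eva N M t) / ((x 0 - x N) * (y 0 - y M))

/-- The coefficient `e_{n,m}`. -/
def eCoef (N M : ℕ) (x y : ℕ → ℝ) (z t : ℕ → ℕ → ℝ) (a b : ℕ → ℕ → ℝ) (n m : ℕ) : ℝ :=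
  (z (n-1) (m-1) - z n (m-1) - a n m * (z 0 0 - z N 0) - b n m * (t 0 0 - t N 0)
    - gCoef N M x y z t a b n m * (x 0 - x N) * y 0) / (x 0 - x N)

/-- The coefficient `f_{n,m}`. -/
def fCoef (N M : ℕ) (x y : ℕ → ℝ) (z t : ℕ → ℕ → ℝ) (a b : ℕ → ℕ → ℝ) (n m : ℕ) : ℝ :=
  (z (n-1) (m-1) - z (n-1) m - a n m * (z 0 0 - z 0 M) - b n m * (t 0 0 - t 0 M)
    - gCoef N M x y z t a b n m * (y 0 - y M) * x 0) / (y 0 - y M)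

/-- The coefficient `k_{n,m}`. -/
def kCoef (N M : ℕ) (x y : ℕ → ℝ) (z t : ℕ → ℕ → ℝ) (a b : ℕ → ℕ → ℝ) (n m : ℕ) : ℝ :=
  z n m - eCoef N M x y z t a b n m * x N - fCoef N M x y z t a b n m * y M
    - a n m * z N M - b n m * t N M - gCoef N M x y z t a b n m * x N * y M

/-- `p_{n,m}(X,Y) = e_{n,m} X + f_{n,m} Y + g_{n,m} X Y + k_{n,m}`. -/
def pMap (N M : ℕ) (x y : ℕ → ℝ) (z t : ℕ → ℕ → ℝ) (a b : ℕ → ℕ → ℝ) (n m : ℕ)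
    (X Y : ℝ) : ℝ :=
  eCoef N M x y z t a b n m * X + fCoef N M x y z t a b n m * Y
    + gCoef N M x y z t a b n m * X * Y + kCoef N M x y z t a b n m

/-- `q_{n,m}(X,Y) = ẽ_{n,m} X + f̃_{n,m} Y + g̃_{n,m} X Y + k̃_{n,m}`; it is `p` built from the
data `t` with parameters `γ` and `0`. -/
def qMap (N M : ℕ) (x y : ℕ → ℝ) (t : ℕ → ℕ → ℝ) (c : ℕ → ℕ → ℝ) (n m : ℕ) (X Y : ℝ) : ℝ :=
  pMap N M x y t t c (fun _ _ => 0) n m X Y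

/-- `φ_n` (resp. `ψ_m`): the affine map of `[x₀, x_N]` onto `[x_{n-1}, x_n]`. -/
def phiMap (N : ℕ) (x : ℕ → ℝ) (n : ℕ) (X : ℝ) : ℝ :=
  x (n-1) + (x n - x (n-1)) * (X - x 0) / (x N - x 0)

/-- Validity of generalized interpolation data: `N, M ≥ 1`, strictly increasing knots,
`|α_{n,m}| < 1` and `|β_{n,m}| + |γ_{n,m}| < 1`. -/
structure DataOK (N M : ℕ) (x y : ℕ → ℝ) (a b c : ℕ → ℕ → ℝ) : Prop where
  hN : 1 ≤ N
  hM : 1 ≤ M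
  hx : ∀ i < N, x i < x (i+1)
  hy : ∀ j < M, y j < y (j+1)
  ha : ∀ n m, 1 ≤ n → n ≤ N → 1 ≤ m → m ≤ M → |a n m| < 1
  hbc : ∀ n m, 1 ≤ n → n ≤ N → 1 ≤ m → m ≤ M → |b n m| + |c n m| < 1

/-- `(F₁, F₂)` is the CHFIS pair for the generalized interpolation data. -/
def IsCHFIS (N M : ℕ) (x y : ℕ → ℝ) (z t : ℕ → ℕ → ℝ) (a b c : ℕ → ℕ → ℝ)
    (F₁ F₂ : ℝ → ℝ → ℝ) : Prop :=
  ContinuousOn (fun P : ℝ × ℝ => F₁ P.1 P.2) (Icc (x 0) (x N) ×ˢ Icc (y 0) (y M)) ∧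
  ContinuousOn (fun P : ℝ × ℝ => F₂ P.1 P.2) (Icc (x 0) (x N) ×ˢ Icc (y 0) (y M)) ∧
  (∀ i ≤ N, ∀ j ≤ M, F₁ (x i) (y j) = z i j ∧ F₂ (x i) (y j) = t i j) ∧
  ∀ n m, 1 ≤ n → n ≤ N → 1 ≤ m → m ≤ M →
    ∀ X ∈ Icc (x 0) (x N), ∀ Y ∈ Icc (y 0) (y M),
      F₁ (phiMap N x n X) (phiMap M y m Y)
        = a n m * F₁ X Y + b n m * F₂ X Y + pMap N M x y z t a b n m X Y ∧
      F₂ (phiMap N x n X) (phiMap M y m Y)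
        = c n m * F₂ X Y + qMap N M x y t c n m X Y

/-- The invariance-of-ratio condition between the knots `x, y` and the knots `xs, ys`. -/
def RatioInv (N M : ℕ) (x y xs ys : ℕ → ℝ) : Prop :=
  (∀ n, 1 ≤ n → n ≤ N → (x 0 - x N) / (xs 0 - xs N) = (x (n-1) - x n) / (xs (n-1) - xs n)) ∧
  (∀ m, 1 ≤ m → m ≤ M → (y 0 - y M) / (ys 0 - ys M) = (y (m-1) - y m) / (ys (m-1) - ys m))

/-- `T : [x₀, x_N] → [xs₀, xs_N]` is the cell-wise affine transfer map, sending
`[x_{n-1}, x_n]` affinely onto `[xs_{n-1}, xs_n]` (one coordinate of `R` resp. `K`). -/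
def IsTransfer (N : ℕ) (x xs : ℕ → ℝ) (T : ℝ → ℝ) : Prop :=
  ∀ n, 1 ≤ n → n ≤ N → ∀ X ∈ Icc (x (n-1)) (x n),
    T X = xs (n-1) + (xs n - xs (n-1)) * (X - x (n-1)) / (x n - x (n-1))

/-- `max { |a n m| : 1 ≤ n ≤ N, 1 ≤ m ≤ M }` (as an `sSup`). -/
def supParam (N M : ℕ) (a : ℕ → ℕ → ℝ) : ℝ :=
  sSup {v : ℝ | ∃ n m, 1 ≤ n ∧ n ≤ N ∧ 1 ≤ m ∧ m ≤ M ∧ v = |a n m|}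

/-- `max { (|x_n - xs_n| + |y_m - ys_m|)^δ : 0 ≤ n ≤ N, 0 ≤ m ≤ M }` (as an `sSup`). -/
def supKnotDiff (N M : ℕ) (x xs y ys : ℕ → ℝ) (d : ℝ) : ℝ :=
  sSup {v : ℝ | ∃ n m, n ≤ N ∧ m ≤ M ∧ v = (|x n - xs n| + |y m - ys m|) ^ d}

/-- `max { |z_{n,m} - zs_{n,m}| : 0 ≤ n ≤ N, 0 ≤ m ≤ M }` (as an `sSup`). -/
def supValDiff (N M : ℕ) (z zs : ℕ → ℕ → ℝ) : ℝ :=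
  sSup {v : ℝ | ∃ n m, n ≤ N ∧ m ≤ M ∧ v = |z n m - zs n m|}

/-- `max { |z_{i,j} - z_{k,l}| : 0 ≤ i,j,k,l ≤ N }` (as an `sSup`). -/
def supPairDiff (N : ℕ) (z : ℕ → ℕ → ℝ) : ℝ :=
  sSup {v : ℝ | ∃ i j k l, i ≤ N ∧ j ≤ N ∧ k ≤ N ∧ l ≤ N ∧ v = |z i j - z k l|}

section Helpers

lemma mono_knots {N : ℕ} {x : ℕ → ℝ} (hx : ∀ i < N, x i < x (i+1)) :
    ∀ j ≤ N, ∀ i ≤ j, x i ≤ x j := by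
  intro j hj
  induction j with
  | zero => intro i hi; interval_cases i; exact le_rfl
  | succ k ih =>
      intro i hi
      rcases Nat.lt_or_ge i (k+1) with h | h
      · exact le_trans (ih (by omega) i (by omega)) (hx k (by omega)).le
      · have : i = k + 1 := by omega
        simp [this]

lemma cell_cover {N : ℕ} {x : ℕ → ℝ} (hx : ∀ i < N, x i < x (i+1)) (hN : 1 ≤ N)
    {X : ℝ} (h0 : x 0 ≤ X) (h1 : X ≤ x N) :
    ∃ n, 1 ≤ n ∧ n ≤ N ∧ x (n-1) ≤ X ∧ X ≤ x n := by
  induction N with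
  | zero => omega
  | succ k ih =>
      rcases le_or_gt X (x k) with h | h
      · rcases Nat.eq_zero_or_pos k with rfl | hk
        · exact ⟨1, le_rfl, le_rfl, by simpa using h0, by simpa using h1⟩
        · obtain ⟨n, h1n, hnk, ha, hb⟩ := ih (fun i hi => hx i (by omega)) hk h
          exact ⟨n, h1n, by omega, ha, hb⟩
      · exact ⟨k+1, by omega, le_rfl, by simpa using h.le, h1⟩

lemma knot_rel {N : ℕ} {x xs : ℕ → ℝ}
    (hxs : ∀ i < N, xs i < xs (i+1))
    (hr : ∀ n, 1 ≤ n → n ≤ N →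
      (x 0 - x N) / (xs 0 - xs N) = (x (n-1) - x n) / (xs (n-1) - xs n)) :
    ∀ n ≤ N, x n = x 0 + (x 0 - x N) / (xs 0 - xs N) * (xs n - xs 0) := by
  intro n hn
  induction n with
  | zero => ring
  | succ k ih =>
      have hne : xs k - xs (k+1) ≠ 0 := by
        have := hxs k (by omega); intro h; linarith [sub_eq_zero.mp h]
      have h := (hr (k+1) (by omega) (by omega)).symm
      simp only [Nat.add_sub_cancel] at h
      have hdiff : x k - x (k+1) = (x 0 - x N) / (xs 0 - xs N) * (xs k - xs (k+1)) :=
        (div_eq_iff hne).mp h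
      have hk := ih (by omega)
      calc x (k+1) = x k - (x 0 - x N) / (xs 0 - xs N) * (xs k - xs (k+1)) := by linarith
      _ = x 0 + (x 0 - x N) / (xs 0 - xs N) * (xs (k+1) - xs 0) := by rw [hk]; ring

lemma transfer_affine {N : ℕ} {x xs : ℕ → ℝ} {K : ℝ → ℝ} (L : ℝ)
    (hxs : ∀ i < N, xs i < xs (i+1)) (hN : 1 ≤ N)
    (hrel : ∀ n ≤ N, x n = x 0 + L * (xs n - xs 0))
    (hK : IsTransfer N xs x K) :
    ∀ X ∈ Icc (xs 0) (xs N), K X = x 0 + L * (X - xs 0) := by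
  intro X hX
  obtain ⟨n, h1, h2, ha, hb⟩ := cell_cover hxs hN hX.1 hX.2
  rw [hK n h1 h2 X ⟨ha, hb⟩]
  have hlt : xs (n-1) < xs n := by
    have := hxs (n-1) (by omega)
    have e : n - 1 + 1 = n := by omega
    rwa [e] at this
  have hne : xs n - xs (n-1) ≠ 0 := by intro h; linarith [sub_eq_zero.mp h]
  rw [hrel n h2, hrel (n-1) (by omega)]
  field_simp
  ring

end Helpers
section Helpers2

variable {N M : ℕ} {x y xs ys : ℕ → ℝ} {z t : ℕ → ℕ → ℝ} {a b : ℕ → ℕ → ℝ} {n m : ℕ}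
variable {L Mu : ℝ}

lemma g_tr (hL : x 0 - x N = L * (xs 0 - xs N)) (hMu : y 0 - y M = Mu * (ys 0 - ys M))
    (hL0 : L ≠ 0) (hMu0 : Mu ≠ 0) (hxs : xs 0 - xs N ≠ 0) (hys : ys 0 - ys M ≠ 0) :
    gCoef N M xs ys z t a b n m = gCoef N M x y z t a b n m * (L * Mu) := by
  unfold gCoef
  rw [hL, hMu]
  field_simp

lemma e_tr (hL : x 0 - x N = L * (xs 0 - xs N)) (hMu : y 0 - y M = Mu * (ys 0 - ys M))
    (hL0 : L ≠ 0) (hMu0 : Mu ≠ 0) (hxs : xs 0 - xs N ≠ 0) (hys : ys 0 - ys M ≠ 0) :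
    eCoef N M xs ys z t a b n m
      = L * eCoef N M x y z t a b n m
        + gCoef N M x y z t a b n m * L * (y 0 - Mu * ys 0) := by
  unfold eCoef
  rw [g_tr hL hMu hL0 hMu0 hxs hys, hL]
  field_simp
  ring

lemma f_tr (hL : x 0 - x N = L * (xs 0 - xs N)) (hMu : y 0 - y M = Mu * (ys 0 - ys M))
    (hL0 : L ≠ 0) (hMu0 : Mu ≠ 0) (hxs : xs 0 - xs N ≠ 0) (hys : ys 0 - ys M ≠ 0) :
    fCoef N M xs ys z t a b n m
      = Mu * fCoef N M x y z t a b n m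
        + gCoef N M x y z t a b n m * Mu * (x 0 - L * xs 0) := by
  unfold fCoef
  rw [g_tr hL hMu hL0 hMu0 hxs hys, hMu]
  field_simp
  ring

lemma k_tr (hL : x 0 - x N = L * (xs 0 - xs N)) (hMu : y 0 - y M = Mu * (ys 0 - ys M))
    (hL0 : L ≠ 0) (hMu0 : Mu ≠ 0) (hxs : xs 0 - xs N ≠ 0) (hys : ys 0 - ys M ≠ 0) :
    kCoef N M xs ys z t a b n m
      = eCoef N M x y z t a b n m * (x 0 - L * xs 0)
        + fCoef N M x y z t a b n m * (y 0 - Mu * ys 0)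
        + gCoef N M x y z t a b n m * (x 0 - L * xs 0) * (y 0 - Mu * ys 0)
        + kCoef N M x y z t a b n m := by
  have hxN : x N = x 0 - L * xs 0 + L * xs N := by linear_combination -hL
  have hyM : y M = y 0 - Mu * ys 0 + Mu * ys M := by linear_combination -hMu
  unfold kCoef
  rw [g_tr hL hMu hL0 hMu0 hxs hys, e_tr hL hMu hL0 hMu0 hxs hys,
    f_tr hL hMu hL0 hMu0 hxs hys, hxN, hyM]
  ring

lemma pMap_transfer (hL : x 0 - x N = L * (xs 0 - xs N)) (hMu : y 0 - y M = Mu * (ys 0 - ys M))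
    (hL0 : L ≠ 0) (hMu0 : Mu ≠ 0) (hxs : xs 0 - xs N ≠ 0) (hys : ys 0 - ys M ≠ 0)
    (X Y : ℝ) :
    pMap N M x y z t a b n m (x 0 + L * (X - xs 0)) (y 0 + Mu * (Y - ys 0))
      = pMap N M xs ys z t a b n m X Y := by
  unfold pMap
  rw [g_tr hL hMu hL0 hMu0 hxs hys, e_tr hL hMu hL0 hMu0 hxs hys,
    f_tr hL hMu hL0 hMu0 hxs hys, k_tr hL hMu hL0 hMu0 hxs hys]
  ring

lemma qMap_transfer (hL : x 0 - x N = L * (xs 0 - xs N)) (hMu : y 0 - y M = Mu * (ys 0 - ys M))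
    (hL0 : L ≠ 0) (hMu0 : Mu ≠ 0) (hxs : xs 0 - xs N ≠ 0) (hys : ys 0 - ys M ≠ 0)
    {c : ℕ → ℕ → ℝ} (X Y : ℝ) :
    qMap N M x y t c n m (x 0 + L * (X - xs 0)) (y 0 + Mu * (Y - ys 0))
      = qMap N M xs ys t c n m X Y := by
  unfold qMap
  exact pMap_transfer hL hMu hL0 hMu0 hxs hys X Y

lemma phi_conj (hn : 1 ≤ n) (hN : n ≤ N)
    (hL : L ≠ 0) (hxsne : xs N - xs 0 ≠ 0)
    (hrel : ∀ k ≤ N, x k = x 0 + L * (xs k - xs 0)) (X : ℝ) :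
    phiMap N x n (x 0 + L * (X - xs 0)) = x 0 + L * (phiMap N xs n X - xs 0) := by
  unfold phiMap
  rw [hrel n hN, hrel (n-1) (by omega), hrel N le_rfl]
  field_simp
  ring

lemma step_knots (hx : ∀ i < N, x i < x (i+1)) (h1 : 1 ≤ n)
    (h2 : n ≤ N) : x (n-1) < x n := by
  have h := hx (n-1) (by omega)
  rwa [Nat.sub_add_cancel h1] at h

lemma ends_knots (hx : ∀ i < N, x i < x (i+1)) (hN : 1 ≤ N) :
    x 0 < x N := by
  have h1 := mono_knots hx (N-1) (by omega) 0 (by omega)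
  have h2 := step_knots hx hN le_rfl
  linarith

lemma phi_mem (hx : ∀ i < N, x i < x (i+1)) (h1 : 1 ≤ n) (h2 : n ≤ N)
    {X : ℝ} (hX : X ∈ Icc (x 0) (x N)) : phiMap N x n X ∈ Icc (x 0) (x N) := by
  have hd : x 0 < x N := ends_knots hx (by omega)
  have hlt : x (n-1) < x n := step_knots hx h1 h2
  have hlow : x 0 ≤ x (n-1) := mono_knots hx (n-1) (by omega) 0 (by omega)
  have hhigh : x n ≤ x N := mono_knots hx N le_rfl n h2
  have hc0 : 0 ≤ (X - x 0) / (x N - x 0) := div_nonneg (by linarith [hX.1]) (by linarith)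
  have hc1 : (X - x 0) / (x N - x 0) ≤ 1 := by
    rw [div_le_one (by linarith)]; linarith [hX.2]
  have e : phiMap N x n X = x (n-1) + (x n - x (n-1)) * ((X - x 0) / (x N - x 0)) := by
    unfold phiMap; ring
  rw [e]
  constructor
  · nlinarith
  · nlinarith [mul_nonneg (by linarith : (0:ℝ) ≤ x n - x (n-1))
      (by linarith : (0:ℝ) ≤ 1 - (X - x 0)/(x N - x 0))]

end Helpers2
section Helpers3

lemma ratio_symm {N : ℕ} {x xs : ℕ → ℝ} (hx : ∀ i < N, x i < x (i+1))
    (hxs : ∀ i < N, xs i < xs (i+1))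
    (hr : ∀ n, 1 ≤ n → n ≤ N →
      (x 0 - x N) / (xs 0 - xs N) = (x (n-1) - x n) / (xs (n-1) - xs n)) :
    ∀ n, 1 ≤ n → n ≤ N →
      (xs 0 - xs N) / (x 0 - x N) = (xs (n-1) - xs n) / (x (n-1) - x n) := by
  intro n h1 h2
  have hN1 : 1 ≤ N := le_trans h1 h2
  have hA : x 0 - x N ≠ 0 := sub_ne_zero.mpr (ends_knots hx hN1).ne
  have hB : xs 0 - xs N ≠ 0 := sub_ne_zero.mpr (ends_knots hxs hN1).ne
  have hC : x (n-1) - x n ≠ 0 := sub_ne_zero.mpr (step_knots hx h1 h2).ne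
  have hDd : xs (n-1) - xs n ≠ 0 := sub_ne_zero.mpr (step_knots hxs h1 h2).ne
  have h := hr n h1 h2
  rw [div_eq_div_iff hB hDd] at h
  rw [div_eq_div_iff hA hC]
  linear_combination -h

lemma affine_isTransfer {N : ℕ} {x xs : ℕ → ℝ} (L' : ℝ) (hx : ∀ i < N, x i < x (i+1))
    (hrel : ∀ n ≤ N, xs n = xs 0 + L' * (x n - x 0)) :
    IsTransfer N x xs (fun X => xs 0 + L' * (X - x 0)) := by
  intro n h1 h2 X hX
  have hlt := step_knots hx h1 h2
  have hne : x n - x (n-1) ≠ 0 := sub_ne_zero.mpr hlt.ne'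
  show xs 0 + L' * (X - x 0) = _
  rw [hrel n h2, hrel (n-1) (by omega)]
  field_simp
  ring

lemma IsCHFIS_congr {N M : ℕ} {x y : ℕ → ℝ} {z t : ℕ → ℕ → ℝ} {a b c : ℕ → ℕ → ℝ}
    {F₁ F₂ G₁ G₂ : ℝ → ℝ → ℝ}
    (hD : DataOK N M x y a b c)
    (heq : ∀ X ∈ Icc (x 0) (x N), ∀ Y ∈ Icc (y 0) (y M), F₁ X Y = G₁ X Y ∧ F₂ X Y = G₂ X Y)
    (hF : IsCHFIS N M x y z t a b c F₁ F₂) :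
    IsCHFIS N M x y z t a b c G₁ G₂ := by
  obtain ⟨hc1, hc2, hint, hfun⟩ := hF
  have hmemx : ∀ i ≤ N, x i ∈ Icc (x 0) (x N) := fun i hi =>
    ⟨mono_knots hD.hx i hi 0 (by omega), mono_knots hD.hx N le_rfl i hi⟩
  have hmemy : ∀ j ≤ M, y j ∈ Icc (y 0) (y M) := fun j hj =>
    ⟨mono_knots hD.hy j hj 0 (by omega), mono_knots hD.hy M le_rfl j hj⟩
  refine ⟨?_, ?_, ?_, ?_⟩
  · apply hc1.congr
    rintro ⟨X, Y⟩ hP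
    exact (heq X hP.1 Y hP.2).1.symm
  · apply hc2.congr
    rintro ⟨X, Y⟩ hP
    exact (heq X hP.1 Y hP.2).2.symm
  · intro i hi j hj
    obtain ⟨h1, h2⟩ := heq (x i) (hmemx i hi) (y j) (hmemy j hj)
    rw [← h1, ← h2]
    exact hint i hi j hj
  · intro n m h1n h2n h1m h2m X hX Y hY
    have hpx : phiMap N x n X ∈ Icc (x 0) (x N) := phi_mem hD.hx h1n h2n hX
    have hpy : phiMap M y m Y ∈ Icc (y 0) (y M) := phi_mem hD.hy h1m h2m hY
    obtain ⟨e1, e2⟩ := heq X hX Y hY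
    obtain ⟨e3, e4⟩ := heq _ hpx _ hpy
    rw [← e1, ← e2, ← e3, ← e4]
    exact hfun n m h1n h2n h1m h2m X hX Y hY

lemma chfis_forward (N M : ℕ) (x y xs ys : ℕ → ℝ) (z t : ℕ → ℕ → ℝ)
    (a b c : ℕ → ℕ → ℝ)
    (hD : DataOK N M x y a b c) (hDs : DataOK N M xs ys a b c)
    (hratio : RatioInv N M x y xs ys)
    (KX KY : ℝ → ℝ)
    (hKX : IsTransfer N xs x KX) (hKY : IsTransfer M ys y KY)
    (F₁ F₂ : ℝ → ℝ → ℝ)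
    (hF : IsCHFIS N M x y z t a b c F₁ F₂) :
    IsCHFIS N M xs ys z t a b c
      (fun X Y => F₁ (KX X) (KY Y)) (fun X Y => F₂ (KX X) (KY Y)) := by
  obtain ⟨hc1, hc2, hint, hfun⟩ := hF
  set L := (x 0 - x N) / (xs 0 - xs N) with hLdef
  set Mu := (y 0 - y M) / (ys 0 - ys M) with hMudef
  have hx0N : x 0 < x N := ends_knots hD.hx hD.hN
  have hy0M : y 0 < y M := ends_knots hD.hy hD.hM
  have hxs0N : xs 0 < xs N := ends_knots hDs.hx hDs.hN
  have hys0M : ys 0 < ys M := ends_knots hDs.hy hDs.hM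
  have hxne : x 0 - x N ≠ 0 := sub_ne_zero.mpr hx0N.ne
  have hyne : y 0 - y M ≠ 0 := sub_ne_zero.mpr hy0M.ne
  have hxsne : xs 0 - xs N ≠ 0 := sub_ne_zero.mpr hxs0N.ne
  have hysne : ys 0 - ys M ≠ 0 := sub_ne_zero.mpr hys0M.ne
  have hxsne' : xs N - xs 0 ≠ 0 := sub_ne_zero.mpr hxs0N.ne'
  have hysne' : ys M - ys 0 ≠ 0 := sub_ne_zero.mpr hys0M.ne'
  have hL0 : L ≠ 0 := div_ne_zero hxne hxsne
  have hMu0 : Mu ≠ 0 := div_ne_zero hyne hysne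
  have hLpos : 0 < L := div_pos_of_neg_of_neg (by linarith) (by linarith)
  have hMupos : 0 < Mu := div_pos_of_neg_of_neg (by linarith) (by linarith)
  have hLrel : x 0 - x N = L * (xs 0 - xs N) := (div_mul_cancel₀ _ hxsne).symm
  have hMurel : y 0 - y M = Mu * (ys 0 - ys M) := (div_mul_cancel₀ _ hysne).symm
  have hrelx : ∀ k ≤ N, x k = x 0 + L * (xs k - xs 0) := knot_rel hDs.hx hratio.1
  have hrely : ∀ k ≤ M, y k = y 0 + Mu * (ys k - ys 0) := knot_rel hDs.hy hratio.2
  have hKaffX : ∀ X ∈ Icc (xs 0) (xs N), KX X = x 0 + L * (X - xs 0) :=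
    transfer_affine L hDs.hx hDs.hN hrelx hKX
  have hKaffY : ∀ Y ∈ Icc (ys 0) (ys M), KY Y = y 0 + Mu * (Y - ys 0) :=
    transfer_affine Mu hDs.hy hDs.hM hrely hKY
  have hmemX : ∀ X ∈ Icc (xs 0) (xs N), x 0 + L * (X - xs 0) ∈ Icc (x 0) (x N) := by
    intro X hX
    have hXN := hrelx N le_rfl
    constructor
    · have := mul_nonneg hLpos.le (sub_nonneg.mpr hX.1); linarith
    · have := mul_le_mul_of_nonneg_left
        (by linarith [hX.2] : X - xs 0 ≤ xs N - xs 0) hLpos.le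
      linarith
  have hmemY : ∀ Y ∈ Icc (ys 0) (ys M), y 0 + Mu * (Y - ys 0) ∈ Icc (y 0) (y M) := by
    intro Y hY
    have hYM := hrely M le_rfl
    constructor
    · have := mul_nonneg hMupos.le (sub_nonneg.mpr hY.1); linarith
    · have := mul_le_mul_of_nonneg_left
        (by linarith [hY.2] : Y - ys 0 ≤ ys M - ys 0) hMupos.le
      linarith
  have hKmemX : ∀ X ∈ Icc (xs 0) (xs N), KX X ∈ Icc (x 0) (x N) := by
    intro X hX; rw [hKaffX X hX]; exact hmemX X hX
  have hKmemY : ∀ Y ∈ Icc (ys 0) (ys M), KY Y ∈ Icc (y 0) (y M) := by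
    intro Y hY; rw [hKaffY Y hY]; exact hmemY Y hY
  have hmemxs : ∀ i ≤ N, xs i ∈ Icc (xs 0) (xs N) := fun i hi =>
    ⟨mono_knots hDs.hx i hi 0 (by omega), mono_knots hDs.hx N le_rfl i hi⟩
  have hmemys : ∀ j ≤ M, ys j ∈ Icc (ys 0) (ys M) := fun j hj =>
    ⟨mono_knots hDs.hy j hj 0 (by omega), mono_knots hDs.hy M le_rfl j hj⟩
  have hKknotX : ∀ i ≤ N, KX (xs i) = x i := by
    intro i hi
    rw [hKaffX _ (hmemxs i hi), ← hrelx i hi]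
  have hKknotY : ∀ j ≤ M, KY (ys j) = y j := by
    intro j hj
    rw [hKaffY _ (hmemys j hj), ← hrely j hj]
  have hgc : Continuous (fun P : ℝ × ℝ =>
      ((x 0 + L * (P.1 - xs 0), y 0 + Mu * (P.2 - ys 0)) : ℝ × ℝ)) := by fun_prop
  have hmaps : MapsTo (fun P : ℝ × ℝ =>
        ((x 0 + L * (P.1 - xs 0), y 0 + Mu * (P.2 - ys 0)) : ℝ × ℝ))
      (Icc (xs 0) (xs N) ×ˢ Icc (ys 0) (ys M)) (Icc (x 0) (x N) ×ˢ Icc (y 0) (y M)) := by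
    rintro ⟨X, Y⟩ hP
    exact ⟨hmemX X hP.1, hmemY Y hP.2⟩
  refine ⟨?_, ?_, ?_, ?_⟩
  · have := hc1.comp hgc.continuousOn hmaps
    apply this.congr
    rintro ⟨X, Y⟩ hP
    simp only [Function.comp]
    rw [hKaffX X hP.1, hKaffY Y hP.2]
  · have := hc2.comp hgc.continuousOn hmaps
    apply this.congr
    rintro ⟨X, Y⟩ hP
    simp only [Function.comp]
    rw [hKaffX X hP.1, hKaffY Y hP.2]
  · intro i hi j hj
    dsimp only
    rw [hKknotX i hi, hKknotY j hj]
    exact hint i hi j hj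
  · intro n m h1n h2n h1m h2m X hX Y hY
    dsimp only
    have hphiX : phiMap N xs n X ∈ Icc (xs 0) (xs N) := phi_mem hDs.hx h1n h2n hX
    have hphiY : phiMap M ys m Y ∈ Icc (ys 0) (ys M) := phi_mem hDs.hy h1m h2m hY
    have e1 : KX (phiMap N xs n X) = phiMap N x n (KX X) := by
      rw [hKaffX _ hphiX, ← phi_conj h1n h2n hL0 hxsne' hrelx X, hKaffX X hX]
    have e2 : KY (phiMap M ys m Y) = phiMap M y m (KY Y) := by
      rw [hKaffY _ hphiY, ← phi_conj h1m h2m hMu0 hysne' hrely Y, hKaffY Y hY]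
    obtain ⟨hfe1, hfe2⟩ := hfun n m h1n h2n h1m h2m (KX X) (hKmemX X hX) (KY Y) (hKmemY Y hY)
    constructor
    · rw [e1, e2, hfe1, hKaffX X hX, hKaffY Y hY,
        pMap_transfer hLrel hMurel hL0 hMu0 hxsne hysne X Y]
    · rw [e1, e2, hfe2, hKaffX X hX, hKaffY Y hY,
        qMap_transfer hLrel hMurel hL0 hMu0 hxsne hysne X Y]

end Helpers3
/-- `(F₁, F₂)` is the CHFIS pair for `Δ` iff `(F₁ ∘ K, F₂ ∘ K)` is the CHFIS
pair for `Δ*`, under the invariance-of-ratio condition (same `z`, `t`, `α`, `β`, `γ`). -/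
theorem chfis_transfer_iff (N M : ℕ) (x y xs ys : ℕ → ℝ) (z t : ℕ → ℕ → ℝ)
    (a b c : ℕ → ℕ → ℝ)
    (hD : DataOK N M x y a b c) (hDs : DataOK N M xs ys a b c)
    (hratio : RatioInv N M x y xs ys)
    (KX KY : ℝ → ℝ)
    (hKX : IsTransfer N xs x KX) (hKY : IsTransfer M ys y KY)
    (F₁ F₂ : ℝ → ℝ → ℝ) :
    IsCHFIS N M x y z t a b c F₁ F₂ ↔
      IsCHFIS N M xs ys z t a b c
        (fun X Y => F₁ (KX X) (KY Y)) (fun X Y => F₂ (KX X) (KY Y)) := by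
  have hx0N : x 0 < x N := ends_knots hD.hx hD.hN
  have hy0M : y 0 < y M := ends_knots hD.hy hD.hM
  have hxs0N : xs 0 < xs N := ends_knots hDs.hx hDs.hN
  have hys0M : ys 0 < ys M := ends_knots hDs.hy hDs.hM
  have hxne : x 0 - x N ≠ 0 := sub_ne_zero.mpr hx0N.ne
  have hyne : y 0 - y M ≠ 0 := sub_ne_zero.mpr hy0M.ne
  have hxsne : xs 0 - xs N ≠ 0 := sub_ne_zero.mpr hxs0N.ne
  have hysne : ys 0 - ys M ≠ 0 := sub_ne_zero.mpr hys0M.ne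
  constructor
  · exact chfis_forward N M x y xs ys z t a b c hD hDs hratio KX KY hKX hKY F₁ F₂
  · intro hG
    set L := (x 0 - x N) / (xs 0 - xs N) with hLdef
    set Mu := (y 0 - y M) / (ys 0 - ys M) with hMudef
    set L' := (xs 0 - xs N) / (x 0 - x N) with hL'def
    set Mu' := (ys 0 - ys M) / (y 0 - y M) with hMu'def
    have hL'pos : 0 < L' := div_pos_of_neg_of_neg (by linarith) (by linarith)
    have hMu'pos : 0 < Mu' := div_pos_of_neg_of_neg (by linarith) (by linarith)
    have hLL' : L * L' = 1 := by
      rw [hLdef, hL'def, div_mul_div_comm, mul_comm (x 0 - x N)]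
      exact div_self (by exact mul_ne_zero (by exact hxsne) hxne)
    have hMM' : Mu * Mu' = 1 := by
      rw [hMudef, hMu'def, div_mul_div_comm, mul_comm (y 0 - y M)]
      exact div_self (mul_ne_zero hysne hyne)
    have hratio' : RatioInv N M xs ys x y :=
      ⟨ratio_symm hD.hx hDs.hx hratio.1, ratio_symm hD.hy hDs.hy hratio.2⟩
    have hrelxs : ∀ k ≤ N, xs k = xs 0 + L' * (x k - x 0) := knot_rel hD.hx hratio'.1
    have hrelys : ∀ k ≤ M, ys k = ys 0 + Mu' * (y k - y 0) := knot_rel hD.hy hratio'.2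
    have hrelx : ∀ k ≤ N, x k = x 0 + L * (xs k - xs 0) := knot_rel hDs.hx hratio.1
    have hrely : ∀ k ≤ M, y k = y 0 + Mu * (ys k - ys 0) := knot_rel hDs.hy hratio.2
    have hLX : IsTransfer N x xs (fun X => xs 0 + L' * (X - x 0)) :=
      affine_isTransfer L' hD.hx hrelxs
    have hLY : IsTransfer M y ys (fun Y => ys 0 + Mu' * (Y - y 0)) :=
      affine_isTransfer Mu' hD.hy hrelys
    have hKaffX : ∀ X ∈ Icc (xs 0) (xs N), KX X = x 0 + L * (X - xs 0) :=
      transfer_affine L hDs.hx hDs.hN hrelx hKX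
    have hKaffY : ∀ Y ∈ Icc (ys 0) (ys M), KY Y = y 0 + Mu * (Y - ys 0) :=
      transfer_affine Mu hDs.hy hDs.hM hrely hKY
    have hLXmem : ∀ X ∈ Icc (x 0) (x N), xs 0 + L' * (X - x 0) ∈ Icc (xs 0) (xs N) := by
      intro X hX
      have hXN := hrelxs N le_rfl
      constructor
      · have := mul_nonneg hL'pos.le (sub_nonneg.mpr hX.1); linarith
      · have := mul_le_mul_of_nonneg_left
          (by linarith [hX.2] : X - x 0 ≤ x N - x 0) hL'pos.le
        linarith
    have hLYmem : ∀ Y ∈ Icc (y 0) (y M), ys 0 + Mu' * (Y - y 0) ∈ Icc (ys 0) (ys M) := by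
      intro Y hY
      have hYM := hrelys M le_rfl
      constructor
      · have := mul_nonneg hMu'pos.le (sub_nonneg.mpr hY.1); linarith
      · have := mul_le_mul_of_nonneg_left
          (by linarith [hY.2] : Y - y 0 ≤ y M - y 0) hMu'pos.le
        linarith
    have h2 := chfis_forward N M xs ys x y z t a b c hDs hD hratio'
      (fun X => xs 0 + L' * (X - x 0)) (fun Y => ys 0 + Mu' * (Y - y 0)) hLX hLY
      (fun X Y => F₁ (KX X) (KY Y)) (fun X Y => F₂ (KX X) (KY Y)) hG
    apply IsCHFIS_congr hD _ h2
    intro X hX Y hY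
    have hKvalX : KX (xs 0 + L' * (X - x 0)) = X := by
      rw [hKaffX _ (hLXmem X hX)]
      have e : xs 0 + L' * (X - x 0) - xs 0 = L' * (X - x 0) := by ring
      rw [e, ← mul_assoc, hLL', one_mul]
      ring
    have hKvalY : KY (ys 0 + Mu' * (Y - y 0)) = Y := by
      rw [hKaffY _ (hLYmem Y hY)]
      have e : ys 0 + Mu' * (Y - y 0) - ys 0 = Mu' * (Y - y 0) := by ring
      rw [e, ← mul_assoc, hMM', one_mul]
      ring
    constructor
    · rw [hKvalX, hKvalY]
    · rw [hKvalX, hKvalY]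

end
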